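/- For every n, the sorting class of the \underline{32}1-avoiding stack-sorting map equals the set of permutations of length n avoiding the consecutive pattern \underline{123} and the classical pattern 132; that is, Sort_n(sc_{\underline{32}1}) = Av_n(\underline{123}, 132). -/
import Mathlib


/-- `τ` contains the vincular pattern with entries `σ` and adjacency-constraint set `A`:
there is an occurrence of the classical pattern `σ` in `τ` (a strictly increasing choice of
positions carrying entries order-isomorphic to `σ`) such that for every `a ∈ A`, the
occurrence positions corresponding to entries `a` and `a + 1` of `σ` are adjacent in `τ`.
Classical patterns correspond to `A = ∅`. -/
def ContainsV (σ : List ℕ) (A : Set ℕ) (τ : List ℕ) : Prop :=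
  ∃ f : Fin σ.length → Fin τ.length,
    StrictMono f ∧
    (∀ a b : Fin σ.length, σ.get a < σ.get b ↔ τ.get (f a) < τ.get (f b)) ∧
    ∀ a : ℕ, a ∈ A → ∀ h : a + 1 < σ.length,
      (f ⟨a + 1, h⟩ : ℕ) = (f ⟨a, Nat.lt_of_succ_lt h⟩ : ℕ) + 1

open Classical in
/-- The `σ`-avoiding stack pass: `scAux σ A stack input` where the stack is recorded
top-to-bottom; the next input element is pushed when the stack contents together with the
new element on top avoid the vincular pattern `(σ, A)`, and otherwise the top of the stack
is popped to the output; at the end the remaining stack entries are popped to the output. -/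
noncomputable def scAux (σ : List ℕ) (A : Set ℕ) : List ℕ → List ℕ → List ℕ
  | stack, [] => stack
  | [], x :: rest => scAux σ A [x] rest
  | y :: stack', x :: rest =>
    if ContainsV σ A (x :: y :: stack') then
      y :: scAux σ A stack' (x :: rest)
    else
      scAux σ A (x :: y :: stack') rest
termination_by stack input => stack.length + 2 * input.length
decreasing_by all_goals (simp only [List.length_cons, List.length_nil]; omega)

/-- The `(σ, A)`-avoiding stack-sorting map `sc_{(σ, A)}`. -/
noncomputable def sc (σ : List ℕ) (A : Set ℕ) (τ : List ℕ) : List ℕ :=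
  scAux σ A [] τ

/-- `τ` is (the one-line notation of) a permutation of `{1, …, n}`. -/
def IsPermList (n : ℕ) (τ : List ℕ) : Prop :=
  τ.Perm (List.range' 1 n)

/-- The sorting class `Sort_n(sc_{(σ, A)})`: permutations of length `n` whose image under
`sc_{(σ, A)}` avoids the classical pattern `231`. -/
def SortSet (σ : List ℕ) (A : Set ℕ) (n : ℕ) : Set (List ℕ) :=
  {τ | IsPermList n τ ∧ ¬ ContainsV [2, 3, 1] ∅ (sc σ A τ)}

theorem containsV3_iff (a b c : ℕ) (A : Set ℕ) (τ : List ℕ) :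
    ContainsV [a, b, c] A τ ↔ ∃ i j k : Fin τ.length, i < j ∧ j < k ∧
      (a < b ↔ τ.get i < τ.get j) ∧ (b < a ↔ τ.get j < τ.get i) ∧
      (a < c ↔ τ.get i < τ.get k) ∧ (c < a ↔ τ.get k < τ.get i) ∧
      (b < c ↔ τ.get j < τ.get k) ∧ (c < b ↔ τ.get k < τ.get j) ∧
      ((0 : ℕ) ∈ A → (j : ℕ) = i + 1) ∧ ((1 : ℕ) ∈ A → (k : ℕ) = j + 1) := by
  constructor
  · rintro ⟨f, hmono, hiso, hadj⟩
    refine ⟨f ⟨0, by norm_num⟩, f ⟨1, by norm_num⟩, f ⟨2, by norm_num⟩,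
      hmono (by norm_num [Fin.lt_def]), hmono (by norm_num [Fin.lt_def]),
      hiso ⟨0, by norm_num⟩ ⟨1, by norm_num⟩, hiso ⟨1, by norm_num⟩ ⟨0, by norm_num⟩,
      hiso ⟨0, by norm_num⟩ ⟨2, by norm_num⟩, hiso ⟨2, by norm_num⟩ ⟨0, by norm_num⟩,
      hiso ⟨1, by norm_num⟩ ⟨2, by norm_num⟩, hiso ⟨2, by norm_num⟩ ⟨1, by norm_num⟩,
      fun h0 => hadj 0 h0 (by norm_num), fun h1 => hadj 1 h1 (by norm_num)⟩
  · rintro ⟨i, j, k, hij, hjk, h1, h2, h3, h4, h5, h6, h7, h8⟩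
    refine ⟨fun p => if (p : ℕ) = 0 then i else if (p : ℕ) = 1 then j else k, ?_, ?_, ?_⟩
    · rintro ⟨p, hp⟩ ⟨q, hq⟩ hpq
      simp only [List.length_cons, List.length_nil] at hp hq
      simp only [Fin.lt_def] at hpq
      interval_cases p <;> interval_cases q <;> simp_all <;>
        first
          | exact hij | exact hjk | exact hij.trans hjk | omega
    · rintro ⟨p, hp⟩ ⟨q, hq⟩
      simp only [List.length_cons, List.length_nil] at hp hq
      interval_cases p <;> interval_cases q <;>
        simp_all [List.get_eq_getElem, lt_irrefl] <;> omega
    · intro p hp h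
      have hp2 : p < 2 := by simp only [List.length_cons, List.length_nil] at h; omega
      interval_cases p
      · simpa using h7 hp
      · simpa using h8 hp


section
variable {τ : List ℕ}

/-- occurrence of classical 231 -/
def Occ231 (τ : List ℕ) : Prop :=
  ∃ i j k, ∃ (hk : k < τ.length) (hij : i < j) (hjk : j < k),
    τ[k] < τ[i]'(by omega) ∧ τ[i]'(by omega) < τ[j]'(by omega)

/-- occurrence of classical 132 -/
def Occ132 (τ : List ℕ) : Prop :=
  ∃ i j k, ∃ (hk : k < τ.length) (hij : i < j) (hjk : j < k),
    τ[i]'(by omega) < τ[k] ∧ τ[k] < τ[j]'(by omega)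

/-- occurrence of consecutive 123 -/
def OccC123 (τ : List ℕ) : Prop :=
  ∃ i, ∃ (h : i + 2 < τ.length),
    τ[i]'(by omega) < τ[i+1]'(by omega) ∧ τ[i+1]'(by omega) < τ[i+2]

/-- occurrence of 1-23 -/
def Occ1V23 (τ : List ℕ) : Prop :=
  ∃ i j, ∃ (h : j + 1 < τ.length) (hij : i < j),
    τ[i]'(by omega) < τ[j]'(by omega) ∧ τ[j]'(by omega) < τ[j+1]

/-- occurrence of 32-1 -/
def OccV321 (τ : List ℕ) : Prop :=
  ∃ i k, ∃ (hk : k < τ.length) (hik : i + 1 < k),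
    τ[k] < τ[i+1]'(by omega) ∧ τ[i+1]'(by omega) < τ[i]'(by omega)

lemma OccV321_length (h : OccV321 τ) : 3 ≤ τ.length := by
  obtain ⟨i, k, hk, hik, -, -⟩ := h; omega

lemma occC123_to_1V23 (h : OccC123 τ) : Occ1V23 τ := by
  obtain ⟨i, h, e1, e2⟩ := h
  exact ⟨i, i+1, by omega, by omega, e1, e2⟩

lemma getElem_app {L t : List ℕ} {m : ℕ} (hm : m < t.length) :
    (L ++ t)[L.length + m]'(by simp; omega) = t[m] := by
  rw [List.getElem_append_right (by omega)]
  congr 1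
  omega

lemma OccV321_append_left (L : List ℕ) (h : OccV321 τ) : OccV321 (L ++ τ) := by
  obtain ⟨i, k, hk, hik, e1, e2⟩ := h
  refine ⟨L.length + i, L.length + k, by simp; omega, by omega, ?_, ?_⟩
  · simp only [Nat.add_assoc]
    rw [getElem_app hk, getElem_app (by omega)]
    exact e1
  · simp only [Nat.add_assoc]
    rw [getElem_app (by omega), getElem_app (by omega)]
    exact e2

lemma OccV321_cons (y : ℕ) (h : OccV321 τ) : OccV321 (y :: τ) :=
  OccV321_append_left [y] h

lemma Occ231_cons (y : ℕ) (h : Occ231 τ) : Occ231 (y :: τ) := by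
  obtain ⟨i, j, k, hk, hij, hjk, e1, e2⟩ := h
  refine ⟨i+1, j+1, k+1, by simp; omega, by omega, by omega, ?_, ?_⟩
  · simpa using e1
  · simpa using e2

end

section
variable {τ : List ℕ}

lemma getElem_rev {t : List ℕ} {p q : ℕ} (hq : q < t.length) (hpq : p + q + 1 = t.length) :
    t.reverse[p]'(by simp; omega) = t[q] := by
  rw [List.getElem_reverse]
  congr 1
  omega

lemma occ132_to_rev (h : Occ132 τ) : Occ231 τ.reverse := by
  obtain ⟨i, j, k, hk, hij, hjk, e1, e2⟩ := h
  refine ⟨τ.length-1-k, τ.length-1-j, τ.length-1-i, by simp; omega, by omega, by omega, ?_, ?_⟩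
  · rw [getElem_rev (q := i) (by omega) (by omega), getElem_rev (q := k) hk (by omega)]
    exact e1
  · rw [getElem_rev (q := k) hk (by omega), getElem_rev (q := j) (by omega) (by omega)]
    exact e2

lemma occ231_to_rev (h : Occ231 τ) : Occ132 τ.reverse := by
  obtain ⟨i, j, k, hk, hij, hjk, e1, e2⟩ := h
  refine ⟨τ.length-1-k, τ.length-1-j, τ.length-1-i, by simp; omega, by omega, by omega, ?_, ?_⟩
  · rw [getElem_rev (q := k) hk (by omega), getElem_rev (q := i) (by omega) (by omega)]
    exact e1
  · rw [getElem_rev (q := i) (by omega) (by omega), getElem_rev (q := j) (by omega) (by omega)]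
    exact e2

lemma occ1V23_to_rev (h : Occ1V23 τ) : OccV321 τ.reverse := by
  obtain ⟨i, j, hj, hij, e1, e2⟩ := h
  refine ⟨τ.length-2-j, τ.length-1-i, by simp; omega, by omega, ?_, ?_⟩
  · rw [getElem_rev (q := i) (by omega) (by omega), getElem_rev (q := j) (by omega) (by omega)]
    exact e1
  · rw [getElem_rev (q := j) (by omega) (by omega), getElem_rev (q := j+1) hj (by omega)]
    exact e2

lemma occV321_to_rev (h : OccV321 τ) : Occ1V23 τ.reverse := by
  obtain ⟨i, k, hk, hik, e1, e2⟩ := h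
  refine ⟨τ.length-1-k, τ.length-2-i, by simp; omega, by omega, ?_, ?_⟩
  · rw [getElem_rev (q := k) hk (by omega), getElem_rev (q := i+1) (by omega) (by omega)]
    exact e1
  · rw [getElem_rev (q := i+1) (by omega) (by omega), getElem_rev (q := i) (by omega) (by omega)]
    exact e2

/-- avoiding consecutive 123 and classical 132, with distinct entries, implies avoiding 1-23 -/
lemma avoid_1V23 (hnd : τ.Nodup) (h1 : ¬ OccC123 τ) (h2 : ¬ Occ132 τ) : ¬ Occ1V23 τ := by
  rintro ⟨i, j, hj, hij, e1, e2⟩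
  obtain ⟨j', rfl⟩ : ∃ j', j = j' + 1 := ⟨j - 1, by omega⟩
  by_cases hc : i = j'
  · subst hc
    exact h1 ⟨i, by omega, e1, e2⟩
  · have hij' : i < j' := by omega
    rcases lt_trichotomy (τ[j']'(by omega)) (τ[j'+1]'(by omega)) with hlt | heq | hgt
    · exact h1 ⟨j', by omega, hlt, e2⟩
    · exact absurd (hnd.getElem_inj_iff.mp heq) (by omega)
    · exact h2 ⟨i, j', j'+1, by omega, hij', by omega, e1, hgt⟩

/-- analysis of the pop guard against a 32-1-avoiding stack -/
lemma guard_analysis {x y : ℕ} {S : List ℕ} (hav : ¬ OccV321 (y :: S))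
    (hg : OccV321 (x :: y :: S)) :
    y < x ∧ ∃ m, ∃ (hm : m < S.length), S[m] < y := by
  obtain ⟨i, k, hk, hik, e1, e2⟩ := hg
  simp only [List.length_cons] at hk
  cases i with
  | zero =>
    obtain ⟨k', rfl⟩ : ∃ k', k = k' + 2 := ⟨k - 2, by omega⟩
    refine ⟨by simpa using e2, k', by omega, ?_⟩
    have : (x :: y :: S)[k'+2] = S[k']'(by omega) := by simp
    rw [this] at e1
    simpa using e1
  | succ i' =>
    exfalso
    apply hav
    obtain ⟨k', rfl⟩ : ∃ k', k = k' + 1 := ⟨k - 1, by omega⟩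
    refine ⟨i', k', by simp only [List.length_cons]; omega, by omega, ?_, ?_⟩
    · have h1 : (x :: y :: S)[k'+1] = (y :: S)[k']'(by simp only [List.length_cons]; omega) := by simp
      have h2 : (x :: y :: S)[i'+1+1]'(by simp only [List.length_cons]; omega) = (y :: S)[i'+1]'(by simp only [List.length_cons]; omega) := by simp
      rw [h1, h2] at e1
      exact e1
    · have h2 : (x :: y :: S)[i'+1+1]'(by simp only [List.length_cons]; omega) = (y :: S)[i'+1]'(by simp only [List.length_cons]; omega) := by simp
      have h3 : (x :: y :: S)[i'+1]'(by simp only [List.length_cons]; omega) = (y :: S)[i']'(by simp only [List.length_cons]; omega) := by simp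
      rw [h2, h3] at e2
      exact e2

end

section SC
open List in

lemma scAux_nil (σ : List ℕ) (A : Set ℕ) (stack : List ℕ) :
    scAux σ A stack [] = stack := by
  cases stack <;> rw [scAux]

lemma scAux_empty (σ : List ℕ) (A : Set ℕ) (x : ℕ) (rest : List ℕ) :
    scAux σ A [] (x :: rest) = scAux σ A [x] rest := by
  rw [scAux]

open Classical in
lemma scAux_cons (σ : List ℕ) (A : Set ℕ) (y x : ℕ) (s' rest : List ℕ) :
    scAux σ A (y :: s') (x :: rest) =
      if ContainsV σ A (x :: y :: s') then y :: scAux σ A s' (x :: rest)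
      else scAux σ A (x :: y :: s') rest := by
  rw [scAux]

open List in
lemma stack_sublist (σ : List ℕ) (A : Set ℕ) :
    ∀ input stack, stack <+ scAux σ A stack input := by
  intro input
  induction input with
  | nil => intro stack; rw [scAux_nil]
  | cons x rest ih =>
    intro stack
    induction stack with
    | nil => simp [scAux_empty]
    | cons y s' ihs =>
      rw [scAux_cons]
      by_cases h : ContainsV σ A (x :: y :: s')
      · rw [if_pos h]
        exact ihs.cons₂ y
      · rw [if_neg h]
        exact ((List.sublist_cons_self x (y :: s')).trans (ih (x :: y :: s')))

end SC

section Bridges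
variable {τ : List ℕ}

lemma containsV_231_iff : ContainsV [2, 3, 1] ∅ τ ↔ Occ231 τ := by
  rw [containsV3_iff]
  constructor
  · rintro ⟨i, j, k, hij, hjk, h1, h2, h3, h4, h5, h6, -, -⟩
    simp only [Fin.lt_def, List.get_eq_getElem] at *
    exact ⟨i, j, k, k.isLt, hij, hjk, by omega, by omega⟩
  · rintro ⟨i, j, k, hk, hij, hjk, e1, e2⟩
    refine ⟨⟨i, by omega⟩, ⟨j, by omega⟩, ⟨k, hk⟩, ?_, ?_, ?_, ?_, ?_, ?_, ?_, ?_, ?_, ?_⟩ <;>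
      simp only [Fin.lt_def, List.get_eq_getElem, Fin.val_mk, Set.mem_empty_iff_false,
        false_implies] <;>
      first | trivial | omega

lemma containsV_132_iff : ContainsV [1, 3, 2] ∅ τ ↔ Occ132 τ := by
  rw [containsV3_iff]
  constructor
  · rintro ⟨i, j, k, hij, hjk, h1, h2, h3, h4, h5, h6, -, -⟩
    simp only [Fin.lt_def, List.get_eq_getElem] at *
    exact ⟨i, j, k, k.isLt, hij, hjk, by omega, by omega⟩
  · rintro ⟨i, j, k, hk, hij, hjk, e1, e2⟩
    refine ⟨⟨i, by omega⟩, ⟨j, by omega⟩, ⟨k, hk⟩, ?_, ?_, ?_, ?_, ?_, ?_, ?_, ?_, ?_, ?_⟩ <;>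
      simp only [Fin.lt_def, List.get_eq_getElem, Fin.val_mk, Set.mem_empty_iff_false,
        false_implies] <;>
      first | trivial | omega

lemma containsV_123c_iff : ContainsV [1, 2, 3] {0, 1} τ ↔ OccC123 τ := by
  rw [containsV3_iff]
  constructor
  · rintro ⟨i, j, k, hij, hjk, h1, h2, h3, h4, h5, h6, h7, h8⟩
    have e7 : (j : ℕ) = i + 1 := h7 (by simp)
    have e8 : (k : ℕ) = j + 1 := h8 (by simp)
    simp only [Fin.lt_def, List.get_eq_getElem] at *
    have g1 : τ[(i : ℕ)+1]'(by omega) = τ[(j : ℕ)]'j.isLt := by congr 1 <;> omega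
    have g2 : τ[(i : ℕ)+2]'(by omega) = τ[(k : ℕ)]'k.isLt := by congr 1 <;> omega
    exact ⟨i, by omega, by omega, by omega⟩
  · rintro ⟨i, h, e1, e2⟩
    refine ⟨⟨i, by omega⟩, ⟨i+1, by omega⟩, ⟨i+2, h⟩, ?_, ?_, ?_, ?_, ?_, ?_, ?_, ?_, ?_, ?_⟩ <;>
      simp only [Fin.lt_def, List.get_eq_getElem, Fin.val_mk] <;>
      first | (intro; rfl) | (intro; trivial) | omega

lemma containsV_321v_iff : ContainsV [3, 2, 1] {0} τ ↔ OccV321 τ := by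
  rw [containsV3_iff]
  constructor
  · rintro ⟨i, j, k, hij, hjk, h1, h2, h3, h4, h5, h6, h7, -⟩
    have e7 : (j : ℕ) = i + 1 := h7 (by simp)
    simp only [Fin.lt_def, List.get_eq_getElem] at *
    have g1 : τ[(i : ℕ)+1]'(by omega) = τ[(j : ℕ)]'j.isLt := by congr 1 <;> omega
    exact ⟨i, k, k.isLt, by omega, by omega, by omega⟩
  · rintro ⟨i, k, hk, hik, e1, e2⟩
    refine ⟨⟨i, by omega⟩, ⟨i+1, by omega⟩, ⟨k, hk⟩, ?_, ?_, ?_, ?_, ?_, ?_, ?_, ?_, ?_, ?_⟩ <;>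
      simp only [Fin.lt_def, List.get_eq_getElem, Fin.val_mk] <;>
      first | (intro h; (first | rfl | trivial | simp at h)) | trivial | omega

end Bridges

section Machine

lemma scAux_no_pop : ∀ (input stack : List ℕ),
    ¬ OccV321 (input.reverse ++ stack) →
    scAux [3, 2, 1] {0} stack input = input.reverse ++ stack := by
  intro input
  induction input with
  | nil => intro stack _; rw [scAux_nil]; simp
  | cons x rest ih =>
    intro stack hav
    have hls : rest.reverse ++ (x :: stack) = (x :: rest).reverse ++ stack := by
      simp
    cases stack with
    | nil =>
      rw [scAux_empty]
      rw [ih [x] (by rw [hls]; simpa using hav)]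
      simp
    | cons y s' =>
      have hg : ¬ ContainsV [3, 2, 1] {0} (x :: y :: s') := by
        intro hc
        exact hav (by
          rw [← hls]
          exact OccV321_append_left _ ((containsV_321v_iff).mp hc))
      rw [scAux_cons, if_neg hg, ih (x :: y :: s') (by rw [hls]; exact hav), hls]

lemma key_pop : ∀ (stack : List ℕ), ¬ OccV321 stack → ∀ x rest, OccV321 (x :: stack) →
    Occ231 (scAux [3, 2, 1] {0} stack (x :: rest)) := by
  intro stack
  induction stack with
  | nil =>
    intro _ x rest h
    have := OccV321_length h
    simp at this
  | cons y S ih =>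
    intro hav x rest hg
    have hguard : ContainsV [3, 2, 1] {0} (x :: y :: S) := (containsV_321v_iff).mpr hg
    rw [scAux_cons, if_pos hguard]
    obtain ⟨hyx, m, hm, hmy⟩ := guard_analysis hav hg
    by_cases h2 : OccV321 (x :: S)
    · have havS : ¬ OccV321 S := fun hS => hav (OccV321_cons y hS)
      exact Occ231_cons y (ih havS x rest h2)
    · have hng : ¬ ContainsV [3, 2, 1] {0} (x :: S) :=
        fun hc => h2 ((containsV_321v_iff).mp hc)
      have hstep : scAux [3, 2, 1] {0} S (x :: rest) = scAux [3, 2, 1] {0} (x :: S) rest := by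
        cases S with
        | nil => rw [scAux_empty]
        | cons s S' => rw [scAux_cons, if_neg hng]
      rw [hstep]
      have hsub : List.Sublist (x :: S) (scAux [3, 2, 1] {0} (x :: S) rest) :=
        stack_sublist _ _ _ _
      set T := scAux [3, 2, 1] {0} (x :: S) rest with hT
      obtain ⟨f, hf⟩ := List.sublist_iff_exists_fin_orderEmbedding_get_eq.mp hsub
      have hlen : (x :: S).length = S.length + 1 := by simp
      have h0 : (0 : ℕ) < (x :: S).length := by simp
      have hm1 : m + 1 < (x :: S).length := by simp; omega
      have hfmono : f ⟨0, h0⟩ < f ⟨m+1, hm1⟩ := by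
        apply f.strictMono
        simp [Fin.lt_def]
      have hfm : (f ⟨0, h0⟩ : ℕ) < (f ⟨m+1, hm1⟩ : ℕ) := hfmono
      have hvx : T.get (f ⟨0, h0⟩) = x := (hf ⟨0, h0⟩).symm
      have hvz : T.get (f ⟨m+1, hm1⟩) = S[m] := by
        have := (hf ⟨m+1, hm1⟩).symm
        rwa [show (x :: S).get ⟨m+1, hm1⟩ = S[m] by simp] at this
      refine ⟨0, (f ⟨0, h0⟩ : ℕ) + 1, (f ⟨m+1, hm1⟩ : ℕ) + 1,
        by simp only [List.length_cons]; omega, by omega, by omega,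
        ?_, ?_⟩
      · have g1 : (y :: T)[(f ⟨m+1, hm1⟩ : ℕ) + 1]'(by simp only [List.length_cons]; omega)
            = T[(f ⟨m+1, hm1⟩ : ℕ)] := by simp
        have g2 : (y :: T)[0]'(by simp only [List.length_cons]; omega) = y := by simp
        rw [g1, g2]
        rw [show T[(f ⟨m+1, hm1⟩ : ℕ)] = T.get (f ⟨m+1, hm1⟩) by simp [List.get_eq_getElem]]
        rw [hvz]
        exact hmy
      · have g1 : (y :: T)[(f ⟨0, h0⟩ : ℕ) + 1]'(by simp only [List.length_cons]; omega)
            = T[(f ⟨0, h0⟩ : ℕ)] := by simp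
        have g2 : (y :: T)[0]'(by simp only [List.length_cons]; omega) = y := by simp
        rw [g1, g2]
        rw [show T[(f ⟨0, h0⟩ : ℕ)] = T.get (f ⟨0, h0⟩) by simp [List.get_eq_getElem]]
        rw [hvx]
        exact hyx

lemma run_231 : ∀ (input stack : List ℕ), ¬ OccV321 stack →
    OccV321 (input.reverse ++ stack) → Occ231 (scAux [3, 2, 1] {0} stack input) := by
  intro input
  induction input with
  | nil =>
    intro stack h1 h2
    rw [scAux_nil]
    exact absurd (by simpa using h2) h1
  | cons x rest ih =>
    intro stack h1 h2
    have hls : rest.reverse ++ (x :: stack) = (x :: rest).reverse ++ stack := by simp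
    cases stack with
    | nil =>
      rw [scAux_empty]
      apply ih [x] (fun h => by have := OccV321_length h; simp at this)
      rw [hls]; simpa using h2
    | cons y S =>
      by_cases hg : ContainsV [3, 2, 1] {0} (x :: y :: S)
      · exact key_pop (y :: S) h1 x rest ((containsV_321v_iff).mp hg)
      · rw [scAux_cons, if_neg hg]
        exact ih (x :: y :: S) (fun h => hg ((containsV_321v_iff).mpr h))
          (by rw [hls]; exact h2)

end Machine


/-- Sort_n(sc_{\un{32}1}) = Av_n(\un{123}, 132). -/
theorem sortingClass_un321 (n : ℕ) :
    SortSet [3, 2, 1] {0} n =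
      {τ | IsPermList n τ ∧ ¬ ContainsV [1, 2, 3] {0, 1} τ ∧
        ¬ ContainsV [1, 3, 2] ∅ τ} := by
  have hnilav : ¬ OccV321 ([] : List ℕ) := fun hx => by have := OccV321_length hx; simp at this
  ext τ
  simp only [SortSet, Set.mem_setOf_eq, containsV_231_iff, containsV_123c_iff,
    containsV_132_iff, sc]
  constructor
  · rintro ⟨hp, h⟩
    have h123 : ¬ Occ1V23 τ := by
      intro hc
      apply h
      have hrev : OccV321 (τ.reverse ++ []) := by simpa using occ1V23_to_rev hc
      exact run_231 τ [] hnilav hrev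
    have hnp : scAux [3, 2, 1] {0} [] τ = τ.reverse := by
      have hnr : ¬ OccV321 (τ.reverse ++ []) := by
        intro hv
        have hv' := occV321_to_rev (show OccV321 τ.reverse by simpa using hv)
        rw [List.reverse_reverse] at hv'
        exact h123 hv'
      simpa using scAux_no_pop τ [] hnr
    refine ⟨hp, fun hc => h123 (occC123_to_1V23 hc), fun hc => h ?_⟩
    rw [hnp]
    exact occ132_to_rev hc
  · rintro ⟨hp, h1, h2⟩
    have hnd : τ.Nodup := hp.nodup_iff.mpr (by simpa using List.nodup_range' (s := 1) (n := n))
    have h123 : ¬ Occ1V23 τ := avoid_1V23 hnd h1 h2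
    have hnp : scAux [3, 2, 1] {0} [] τ = τ.reverse := by
      have hnr : ¬ OccV321 (τ.reverse ++ []) := by
        intro hv
        have hv' := occV321_to_rev (show OccV321 τ.reverse by simpa using hv)
        rw [List.reverse_reverse] at hv'
        exact h123 hv'
      simpa using scAux_no_pop τ [] hnr
    refine ⟨hp, fun hc => ?_⟩
    rw [hnp] at hc
    have hc' := occ231_to_rev hc
    rw [List.reverse_reverse] at hc'
    exact h2 hc'
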